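/- Let n ≥ 2 and, for x ∈ ℝⁿ with xₙ ≠ 0, define P₁(x),…,P_{n−1}(x) by: R(x) = exp(−(x_{n−1}/xₙ)X)·x, Qᵣ(x) = the r-th coordinate of R(x), Pᵣ(x) = xₙ^{n−r−1}·Qᵣ(x) for 1 ≤ r ≤ n−2, and P_{n−1}(x) = xₙ. Then for every polynomial p ∈ ℝ[x₁,…,xₙ] with p(exp(tX)·x) = p(x) for all t ∈ ℝ and x ∈ ℝⁿ, there exist a natural number k and a polynomial F in n−1 variables over ℝ such that xₙᵏ · p(x) = F(P₁(x),…,P_{n−1}(x)) for all x ∈ ℝⁿ with xₙ ≠ 0. -/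

import Mathlib

open Matrix

/-- The regular nilpotent Jordan block: `X_{i,i+1} = 1`, all other entries `0`. -/
noncomputable def jordanX (n : ℕ) : Matrix (Fin n) (Fin n) ℝ :=
  Matrix.of fun i j => if (i : ℕ) + 1 = (j : ℕ) then 1 else 0

/-- The action of the one-parameter unipotent group `{exp(tX) : t ∈ ℝ}` on `ℝⁿ`. -/
noncomputable def uniAct (n : ℕ) (t : ℝ) (x : Fin n → ℝ) : Fin n → ℝ :=
  (NormedSpace.exp (t • jordanX n)).mulVec x

/-- The rational invariants `P₁, …, P_{n-1}` (indexed here by `r : Fin (n-1)`, so that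
`invP n hn r` is `P_{r+1}`): with `R(x) = exp(−(x_{n−1}/xₙ)X)·x` and `Qᵣ(x)` its `r`-th
coordinate, `Pᵣ(x) = xₙ^{n−r−1}·Qᵣ(x)` for `1 ≤ r ≤ n−2` and `P_{n−1}(x) = xₙ`. -/
noncomputable def invP (n : ℕ) (hn : 2 ≤ n) (r : Fin (n - 1)) (x : Fin n → ℝ) : ℝ :=
  if (r : ℕ) = n - 2 then x ⟨n - 1, by omega⟩
  else (x ⟨n - 1, by omega⟩) ^ (n - (r : ℕ) - 2) *
    uniAct n (-(x ⟨n - 2, by omega⟩ / x ⟨n - 1, by omega⟩)) x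
      ⟨(r : ℕ), lt_of_lt_of_le r.isLt (Nat.sub_le n 1)⟩

section Aux

attribute [local instance] Matrix.linftyOpNormedRing Matrix.linftyOpNormedAlgebra

lemma jordanX_pow (n k : ℕ) :
    jordanX n ^ k = Matrix.of fun (i j : Fin n) =>
      if (i : ℕ) + k = (j : ℕ) then (1 : ℝ) else 0 := by
  induction k with
  | zero =>
    ext i j
    simp [Matrix.one_apply, Fin.ext_iff, eq_comm]
  | succ k ih =>
    ext i j
    rw [pow_succ, ih, Matrix.mul_apply]
    simp only [Matrix.of_apply, jordanX, ite_mul, one_mul, zero_mul]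
    by_cases h : (i : ℕ) + k < n
    · rw [Finset.sum_eq_single (⟨(i : ℕ) + k, h⟩ : Fin n)]
      · simp [add_assoc]
      · intro b _ hb
        rw [if_neg]
        intro hc
        exact hb (Fin.ext hc.symm)
      · simp
    · rw [if_neg (by have := j.isLt; omega), Finset.sum_eq_zero]
      intro b _
      rw [if_neg (by have := b.isLt; omega)]

lemma exp_smul_jordanX (n : ℕ) (t : ℝ) :
    NormedSpace.exp (t • jordanX n) =
      ∑ k ∈ Finset.range n, (t ^ k * (↑(Nat.factorial k))⁻¹) • jordanX n ^ k := by
  rw [NormedSpace.exp_eq_tsum ℝ]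
  dsimp only
  rw [tsum_eq_sum (s := Finset.range n)]
  · apply Finset.sum_congr rfl
    intro k _
    rw [smul_pow, smul_smul]
    ring_nf
  · intro k hk
    simp only [Finset.mem_range, not_lt] at hk
    rw [smul_pow, jordanX_pow]
    have : (Matrix.of fun (i j : Fin n) => if (i : ℕ) + k = (j : ℕ) then (1:ℝ) else 0) = 0 := by
      ext i j
      simp only [Matrix.of_apply, Matrix.zero_apply, ite_eq_right_iff]
      intro h
      omega
    rw [this]
    simp

lemma innerIfSum (n : ℕ) (x : Fin n → ℝ) (v : ℕ) :
    ∑ j : Fin n, (if v = (j : ℕ) then (1:ℝ) else 0) * x j =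
      if h : v < n then x ⟨v, h⟩ else 0 := by
  split
  · rename_i h
    rw [Finset.sum_eq_single (⟨v, h⟩ : Fin n)]
    · simp
    · intro b _ hb
      rw [if_neg, zero_mul]
      exact fun hc => hb (Fin.ext hc.symm)
    · simp
  · apply Finset.sum_eq_zero
    intro b _
    rw [if_neg, zero_mul]
    have := b.isLt; omega

lemma uniAct_apply (n : ℕ) (t : ℝ) (x : Fin n → ℝ) (i : Fin n) :
    uniAct n t x i = ∑ k ∈ Finset.range n, (t ^ k * (↑(Nat.factorial k))⁻¹) *
      (if h : (i : ℕ) + k < n then x ⟨(i : ℕ) + k, h⟩ else 0) := by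
  unfold uniAct
  rw [exp_smul_jordanX, Matrix.mulVec, dotProduct]
  simp only [Matrix.sum_apply, Finset.sum_apply, Finset.sum_mul, Matrix.smul_apply, jordanX_pow,
    Matrix.of_apply, smul_eq_mul, mul_assoc]
  rw [Finset.sum_comm]
  apply Finset.sum_congr rfl
  intro k _
  rw [← Finset.mul_sum]
  congr 1
  rw [← Finset.mul_sum]
  congr 1
  exact innerIfSum n x ((i : ℕ) + k)

lemma uniAct_last (m : ℕ) (t : ℝ) (x : Fin (m + 2) → ℝ) :
    uniAct (m + 2) t x ⟨m + 1, by omega⟩ = x ⟨m + 1, by omega⟩ := by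
  rw [uniAct_apply, Finset.sum_eq_single 0]
  · simp [Nat.factorial]
  · intro k _ hk
    rw [dif_neg (by simp; omega), mul_zero]
  · simp

lemma uniAct_pen (m : ℕ) (t : ℝ) (x : Fin (m + 2) → ℝ) :
    uniAct (m + 2) t x ⟨m, by omega⟩ = x ⟨m, by omega⟩ + t * x ⟨m + 1, by omega⟩ := by
  rw [uniAct_apply]
  rw [← Finset.sum_subset (Finset.range_subset_range.mpr (show 2 ≤ m + 2 by omega))]
  · rw [Finset.sum_range_succ, Finset.sum_range_one]
    rw [dif_pos (by simp), dif_pos (by simp)]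
    simp [Nat.factorial]
  · intro k _ hk
    simp only [Finset.mem_range, not_lt] at hk
    rw [dif_neg (by simp; omega), mul_zero]

lemma invP_last (m : ℕ) (hn : 2 ≤ m + 2) (x : Fin (m + 2) → ℝ) :
    invP (m + 2) hn (Fin.last m) x = x ⟨m + 1, by omega⟩ := by
  unfold invP
  rw [if_pos (by have : ((Fin.last m : Fin (m + 1)) : ℕ) = m := rfl; omega)]
  rfl

lemma invP_castSucc (m : ℕ) (hn : 2 ≤ m + 2) (r : Fin m) (x : Fin (m + 2) → ℝ) :
    invP (m + 2) hn r.castSucc x =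
      x ⟨m + 1, by omega⟩ ^ (m - (r : ℕ)) *
        uniAct (m + 2) (-(x ⟨m, by omega⟩ / x ⟨m + 1, by omega⟩)) x
          ⟨(r : ℕ), by omega⟩ := by
  unfold invP
  rw [if_neg (by have h1 : ((r.castSucc : Fin (m + 1)) : ℕ) = (r : ℕ) := rfl
                 have := r.isLt; omega)]
  have h2 : m + 2 - ((r.castSucc : Fin (m + 1)) : ℕ) - 2 = m - (r : ℕ) := by
    have h1 : ((r.castSucc : Fin (m + 1)) : ℕ) = (r : ℕ) := rfl
    have := r.isLt; omega
  rw [h2]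
  rfl

end Aux

/-- Every `G`-invariant polynomial `p` on `ℝⁿ`, after multiplication by a
suitable power `xₙᵏ`, is a polynomial in `P₁, …, P_{n−1}` on the open set `{xₙ ≠ 0}`. -/
theorem invariant_polynomial_localized_in_P (n : ℕ) (hn : 2 ≤ n)
    (p : MvPolynomial (Fin n) ℝ)
    (hp : ∀ (t : ℝ) (x : Fin n → ℝ),
      MvPolynomial.eval (uniAct n t x) p = MvPolynomial.eval x p) :
    ∃ (k : ℕ) (F : MvPolynomial (Fin (n - 1)) ℝ),
      ∀ x : Fin n → ℝ, x ⟨n - 1, by omega⟩ ≠ 0 →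
        (x ⟨n - 1, by omega⟩) ^ k * MvPolynomial.eval x p =
          MvPolynomial.eval (fun r => invP n hn r x) F := by
  classical
  obtain ⟨m, rfl⟩ : ∃ m, n = m + 2 := ⟨n - 2, by omega⟩
  set D := p.totalDegree with hD
  set k := m * D with hk
  set S : (Fin (m + 2) →₀ ℕ) → ℕ :=
    fun a => ∑ r : Fin m, (m - (r : ℕ)) * a r.castSucc.castSucc with hS
  set b : (Fin (m + 2) →₀ ℕ) → (Fin (m + 1) →₀ ℕ) :=
    fun a => Finsupp.equivFunOnFinite.symm fun r =>
      if r = Fin.last m then k + a (Fin.last (m + 1)) - S a else a r.castSucc with hb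
  refine ⟨k, ∑ a ∈ p.support, if a ((Fin.last m).castSucc) = 0
      then MvPolynomial.monomial (b a) (p.coeff a) else 0, ?_⟩
  intro x hx0
  have hx : x ⟨m + 1, by omega⟩ ≠ 0 := hx0
  set t : ℝ := -(x ⟨m, by omega⟩ / x ⟨m + 1, by omega⟩) with ht
  have hyL : uniAct (m + 2) t x (Fin.last (m + 1)) = x ⟨m + 1, by omega⟩ := uniAct_last m t x
  have hyP : uniAct (m + 2) t x ((Fin.last m).castSucc) = 0 := by
    have h := uniAct_pen m t x
    rw [ht] at h
    have h2 : uniAct (m + 2) t x ((Fin.last m).castSucc) = uniAct (m + 2) t x ⟨m, by omega⟩ := rfl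
    rw [h2, h]
    field_simp
    ring
  have hev : MvPolynomial.eval (uniAct (m + 2) t x) p = MvPolynomial.eval x p := hp t x
  have main : x ⟨m + 1, by omega⟩ ^ k * MvPolynomial.eval x p =
      MvPolynomial.eval (fun r : Fin (m + 1) => invP (m + 2) hn r x)
        (∑ a ∈ p.support, if a ((Fin.last m).castSucc) = 0
          then MvPolynomial.monomial (b a) (p.coeff a) else 0) := by
    rw [← hev, MvPolynomial.eval_eq', map_sum, Finset.mul_sum]
    apply Finset.sum_congr rfl
    intro a ha
    -- the weight bound
    have hSa : S a ≤ k := by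
      have h1 : S a ≤ ∑ r : Fin m, m * a r.castSucc.castSucc :=
        Finset.sum_le_sum fun r _ => Nat.mul_le_mul_right _ (Nat.sub_le m r)
      have h2 : ∑ r : Fin m, m * a r.castSucc.castSucc
          = m * ∑ r : Fin m, a r.castSucc.castSucc := by
        rw [Finset.mul_sum]
      have h3 : ∑ r : Fin m, a r.castSucc.castSucc ≤ ∑ i : Fin (m + 2), a i := by
        rw [Fin.sum_univ_castSucc, Fin.sum_univ_castSucc]
        omega
      have h4 : ∑ i : Fin (m + 2), a i = a.sum fun _ e => e := by
        rw [Finsupp.sum_fintype]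
        intro _; rfl
      have h5 : (a.sum fun _ e => e) ≤ D := MvPolynomial.le_totalDegree ha
      calc S a ≤ m * ∑ r : Fin m, a r.castSucc.castSucc := by omega
        _ ≤ m * (a.sum fun _ e => e) := by
            rw [← h4]; exact Nat.mul_le_mul_left _ h3
        _ ≤ k := Nat.mul_le_mul_left _ h5
    -- split the product over Fin (m+2)
    rw [Fin.prod_univ_castSucc (f := fun i => uniAct (m + 2) t x i ^ a i),
      Fin.prod_univ_castSucc (f := fun i : Fin (m + 1) =>
        uniAct (m + 2) t x i.castSucc ^ a i.castSucc)]
    rw [hyL, hyP]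
    by_cases h0 : a ((Fin.last m).castSucc) = 0
    · rw [if_pos h0, h0, pow_zero, mul_one, MvPolynomial.eval_monomial,
        Finsupp.prod_fintype _ _ (fun _ => pow_zero _), Fin.prod_univ_castSucc]
      have hblast : b a (Fin.last m) = k + a (Fin.last (m + 1)) - S a := by
        simp [hb]
      have hbcs : ∀ r : Fin m, b a r.castSucc = a r.castSucc.castSucc := by
        intro r
        simp [hb, (Fin.castSucc_lt_last r).ne]
      have hPcs : ∀ r : Fin m, invP (m + 2) hn r.castSucc x =
          x ⟨m + 1, by omega⟩ ^ (m - (r : ℕ)) * uniAct (m + 2) t x r.castSucc.castSucc := by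
        intro r
        rw [invP_castSucc, ht]
        rfl
      simp only [hblast, hbcs, hPcs, invP_last, mul_pow, ← pow_mul]
      rw [Finset.prod_mul_distrib, Finset.prod_pow_eq_pow_sum]
      have hSs : (∑ r : Fin m, (m - (r : ℕ)) * a r.castSucc.castSucc) = S a := rfl
      rw [hSs]
      have hle : S a ≤ k + a (Fin.last (m + 1)) := le_trans hSa (Nat.le_add_right _ _)
      rw [pow_sub₀ _ hx hle, pow_add]
      field_simp
    · rw [if_neg h0, map_zero, zero_pow h0]
      ring
  exact main
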